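/- For 0 < p < 1 and nonnegative integers k ≤ p·z, the binomial tail satisfies B_{z,k}(p) ≤ exp(−z·D(k/z ‖ p)), where D is the binary relative entropy. -/

import Mathlib

/-- Binomial cumulative distribution function B_{z,k}(p). -/
noncomputable def binCDF (z k : ℕ) (p : ℝ) : ℝ :=
  ∑ j ∈ Finset.range (k + 1), (z.choose j : ℝ) * p ^ j * (1 - p) ^ (z - j)

/-- Binary relative entropy. -/
noncomputable def binRelEnt (p q : ℝ) : ℝ :=
  p * Real.log (p / q) + (1 - p) * Real.log ((1 - p) / (1 - q))

theorem stmt_3 (z k : ℕ) (p : ℝ) (hp0 : 0 < p) (hp1 : p < 1)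
    (hk : (k : ℝ) ≤ p * z) :
    binCDF z k p ≤ Real.exp (-(z : ℝ) * binRelEnt ((k : ℝ) / (z : ℝ)) p) := by
  have hq : (0:ℝ) < 1 - p := by linarith
  rcases Nat.eq_zero_or_pos k with rfl | hkpos
  · rcases Nat.eq_zero_or_pos z with rfl | hzpos
    · simp [binCDF, binRelEnt]
    · have h1 : binCDF z 0 p = (1-p)^z := by simp [binCDF]
      have h2 : ((0:ℕ):ℝ) / (z:ℝ) = 0 := by simp
      rw [h1, h2]
      have h3 : binRelEnt 0 p = - Real.log (1 - p) := by
        simp [binRelEnt]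
      rw [h3]
      have h4 : -(z:ℝ) * -Real.log (1-p) = (z:ℝ) * Real.log (1-p) := by ring
      rw [h4, Real.exp_nat_mul, Real.exp_log hq]
  · have hz0 : 0 < z := by
      rcases Nat.eq_zero_or_pos z with rfl | h
      · exfalso
        have hk1 : (1:ℝ) ≤ k := by exact_mod_cast hkpos
        simp at hk
        linarith
      · exact h
    have hzR : (0:ℝ) < z := by exact_mod_cast hz0
    set x : ℝ := (k:ℝ)/(z:ℝ) with hxdef
    have hkR : (0:ℝ) < k := by exact_mod_cast hkpos
    have hx0 : 0 < x := div_pos hkR hzR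
    have hxp : x ≤ p := (div_le_iff₀ hzR).mpr (by linarith)
    have hx1 : 0 < 1 - x := by linarith [lt_of_le_of_lt hxp hp1]
    have hkz : k < z := by
      have : (k:ℝ) < z := lt_of_le_of_lt hk (by nlinarith)
      exact_mod_cast this
    set q : ℝ := 1 - p with hqdef
    set s : ℝ := x * q / (p * (1 - x)) with hsdef
    have hs0 : 0 < s := div_pos (mul_pos hx0 hq) (mul_pos hp0 hx1)
    have hs1 : s ≤ 1 := by
      rw [div_le_one (mul_pos hp0 hx1)]
      nlinarith
    -- Chernoff step
    have hsum : s^k * binCDF z k p ≤ (s*p + q)^z := by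
      rw [binCDF, Finset.mul_sum]
      calc ∑ j ∈ Finset.range (k+1), s^k * ((z.choose j : ℝ) * p ^ j * q ^ (z - j))
          ≤ ∑ j ∈ Finset.range (k+1), (s*p) ^ j * q ^ (z - j) * (z.choose j : ℝ) := by
            apply Finset.sum_le_sum
            intro j hj
            have hj' : j ≤ k := Nat.lt_succ_iff.mp (Finset.mem_range.mp hj)
            have h1 : s^k ≤ s^j := pow_le_pow_of_le_one hs0.le hs1 hj'
            have hnn : 0 ≤ (z.choose j : ℝ) * p ^ j * q ^ (z - j) := by positivity
            calc s^k * ((z.choose j : ℝ) * p ^ j * q ^ (z - j))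
                ≤ s^j * ((z.choose j : ℝ) * p ^ j * q ^ (z - j)) :=
                  mul_le_mul_of_nonneg_right h1 hnn
              _ = (s*p) ^ j * q ^ (z - j) * (z.choose j : ℝ) := by
                  rw [mul_pow]; ring
        _ ≤ ∑ j ∈ Finset.range (z+1), (s*p) ^ j * q ^ (z - j) * (z.choose j : ℝ) := by
            apply Finset.sum_le_sum_of_subset_of_nonneg
            · exact Finset.range_subset_range.mpr (by omega)
            · intro j _ _
              positivity
        _ = (s*p + q)^z := (add_pow (s*p) q z).symm
    have hspq : s * p + q = q / (1 - x) := by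
      rw [hsdef]
      field_simp
      ring
    have hB : binCDF z k p ≤ (q/(1-x))^z / s^k := by
      rw [le_div_iff₀ (pow_pos hs0 k)]
      calc binCDF z k p * s^k = s^k * binCDF z k p := mul_comm _ _
        _ ≤ (s*p + q)^z := hsum
        _ = (q/(1-x))^z := by rw [hspq]
    -- identify the RHS
    set m := z - k with hm
    have hmz : (m:ℝ) = (z:ℝ) - k := by
      rw [hm, Nat.cast_sub hkz.le]
    have hzx : (z:ℝ) * x = k := by
      rw [hxdef]; field_simp
    have hzx2 : (z:ℝ) * (1 - x) = (m:ℝ) := by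
      rw [hmz]; nlinarith [hzx]
    have hlog : -(z:ℝ) * binRelEnt x p =
        (k:ℝ) * Real.log (p/x) + (m:ℝ) * Real.log (q/(1-x)) := by
      rw [binRelEnt, Real.log_div hx0.ne' hp0.ne', Real.log_div hx1.ne' hq.ne',
        Real.log_div hp0.ne' hx0.ne', Real.log_div hq.ne' hx1.ne']
      linear_combination (Real.log p - Real.log x) * hzx +
        (Real.log q - Real.log (1-x)) * hzx2
    have hRHS : Real.exp (-(z:ℝ) * binRelEnt x p) = (q/(1-x))^z / s^k := by
      rw [hlog, Real.exp_add, Real.exp_nat_mul, Real.exp_nat_mul,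
        Real.exp_log (div_pos hp0 hx0), Real.exp_log (div_pos hq hx1)]
      have key : q/(1-x)/s = p/x := by
        rw [hsdef]
        field_simp
      have hzkm : z = k + m := by omega
      rw [hzkm, pow_add, ← key, div_pow]
      ring
    rw [hRHS]
    exact hB
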